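/- Let p be a positive natural number, and let K be a real symmetric p×p matrix such that K − m•I and M•I − K are positive semidefinite, where 0 < m ≤ M. Let a, b ∈ ℝᵖ with a ≠ 0, and let D be a real p×p matrix with ℓ²→ℓ² operator norm ‖D‖_op ≤ η₁. If ⟨a, K·b⟩ ≥ 0 and M·η₁ < m, then ⟨a, K·a⟩ + ⟨a, K·b⟩ + ⟨a, K·(D·a)⟩ ≥ (m − M·η₁)·‖a‖² > 0. -/

import Mathlib

open scoped RealInnerProductSpace

/-- The `ℓ² → ℓ²` operator norm of a real square matrix. -/
noncomputable def l2OpNorm {p : ℕ} (A : Matrix (Fin p) (Fin p) ℝ) : ℝ :=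
  ‖Matrix.toEuclideanCLM (𝕜 := ℝ) A‖

/-- Matrix-vector multiplication viewed as a map on Euclidean space. -/
def mv {p : ℕ} (A : Matrix (Fin p) (Fin p) ℝ) (x : EuclideanSpace ℝ (Fin p)) :
    EuclideanSpace ℝ (Fin p) := WithLp.toLp 2 (A.mulVec x)

lemma mv_eq_clm {p : ℕ} (A : Matrix (Fin p) (Fin p) ℝ) (x : EuclideanSpace ℝ (Fin p)) :
    mv A x = (Matrix.toEuclideanCLM (𝕜 := ℝ) A) x :=
  (congrArg (WithLp.toLp 2) (Matrix.ofLp_toEuclideanCLM A x)).symm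

lemma inner_mv {p : ℕ} (A : Matrix (Fin p) (Fin p) ℝ) (x y : EuclideanSpace ℝ (Fin p)) :
    ⟪x, mv A y⟫ = dotProduct (x : Fin p → ℝ) (A.mulVec y) := by
  simp [mv, PiLp.inner_apply, dotProduct, mul_comm]

lemma inner_mv_symm {p : ℕ} {A : Matrix (Fin p) (Fin p) ℝ} (hA : A.IsSymm)
    (x y : EuclideanSpace ℝ (Fin p)) : ⟪x, mv A y⟫ = ⟪y, mv A x⟫ := by
  rw [inner_mv, inner_mv, Matrix.dotProduct_mulVec, ← Matrix.mulVec_transpose, hA,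
    dotProduct_comm]

lemma mv_add {p : ℕ} (A : Matrix (Fin p) (Fin p) ℝ) (x y : EuclideanSpace ℝ (Fin p)) :
    mv A (x + y) = mv A x + mv A y := by
  simp only [mv]
  exact congrArg (WithLp.equiv 2 _).symm (Matrix.mulVec_add A x y)

lemma mv_smul {p : ℕ} (A : Matrix (Fin p) (Fin p) ℝ) (t : ℝ) (x : EuclideanSpace ℝ (Fin p)) :
    mv A (t • x) = t • mv A x := by
  simp only [mv]
  exact congrArg (WithLp.equiv 2 _).symm (Matrix.mulVec_smul A t x)

/-- **Self-training helps near good models under diversity-seeking samplers.**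
If the whitened sampler bias `b` makes a nonobtuse `K`-angle with the whitened model error
`a` (`⟪a, K b⟫ ≥ 0`) and the curvature tilt is small (`M η₁ < m`), then the whitened
alignment scalar is at least `(m − M η₁) ‖a‖² > 0`, i.e. strictly positive. -/
theorem self_training_helps
    {p : ℕ} (hp : 0 < p) (K : Matrix (Fin p) (Fin p) ℝ) (hKsymm : K.IsSymm)
    (m M : ℝ) (hm : 0 < m) (hmM : m ≤ M)
    (hKlow : (K - m • (1 : Matrix (Fin p) (Fin p) ℝ)).PosSemidef)
    (hKhigh : ((M • (1 : Matrix (Fin p) (Fin p) ℝ)) - K).PosSemidef)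
    (a b : EuclideanSpace ℝ (Fin p)) (ha : a ≠ 0)
    (D : Matrix (Fin p) (Fin p) ℝ) (η₁ : ℝ) (hD : l2OpNorm D ≤ η₁)
    (hacute : 0 ≤ ⟪a, mv K b⟫) (htilt : M * η₁ < m) :
    (m - M * η₁) * ‖a‖ ^ 2 ≤ ⟪a, mv K a⟫ + ⟪a, mv K b⟫ + ⟪a, mv K (mv D a)⟫ ∧
      0 < (m - M * η₁) * ‖a‖ ^ 2 := by
  have hη : 0 ≤ η₁ := le_trans (norm_nonneg _) hD
  have hM0 : 0 ≤ M := le_trans hm.le hmM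
  -- quadratic form bounds
  have hlow : ∀ v : EuclideanSpace ℝ (Fin p), m * ‖v‖ ^ 2 ≤ ⟪v, mv K v⟫ := by
    intro v
    have h := hKlow.dotProduct_mulVec_nonneg (v : Fin p → ℝ)
    have hvv : dotProduct (v : Fin p → ℝ) v = ‖v‖ ^ 2 := by
      rw [← real_inner_self_eq_norm_sq]
      simp only [PiLp.inner_apply, dotProduct, RCLike.inner_apply, conj_trivial]
    simp only [star_trivial, Matrix.sub_mulVec, Matrix.smul_mulVec, Matrix.one_mulVec,
      dotProduct_sub, dotProduct_smul, smul_eq_mul, sub_nonneg, hvv] at h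
    rw [inner_mv]
    exact h
  have hhigh : ∀ v : EuclideanSpace ℝ (Fin p), ⟪v, mv K v⟫ ≤ M * ‖v‖ ^ 2 := by
    intro v
    have h := hKhigh.dotProduct_mulVec_nonneg (v : Fin p → ℝ)
    have hvv : dotProduct (v : Fin p → ℝ) v = ‖v‖ ^ 2 := by
      rw [← real_inner_self_eq_norm_sq]
      simp only [PiLp.inner_apply, dotProduct, RCLike.inner_apply, conj_trivial]
    simp only [star_trivial, Matrix.sub_mulVec, Matrix.smul_mulVec, Matrix.one_mulVec,
      dotProduct_sub, dotProduct_smul, smul_eq_mul, sub_nonneg, hvv] at h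
    rw [inner_mv]
    exact h
  set x := mv D a with hx
  have hxn : ‖x‖ ≤ η₁ * ‖a‖ := by
    rw [hx, mv_eq_clm]
    calc ‖(Matrix.toEuclideanCLM (𝕜 := ℝ) D) a‖
        ≤ ‖Matrix.toEuclideanCLM (𝕜 := ℝ) D‖ * ‖a‖ := (Matrix.toEuclideanCLM (𝕜 := ℝ) D).le_opNorm a
      _ ≤ η₁ * ‖a‖ := mul_le_mul_of_nonneg_right hD (norm_nonneg a)
  have hxsq : ‖x‖ ^ 2 ≤ η₁ ^ 2 * ‖a‖ ^ 2 := by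
    have := mul_self_le_mul_self (norm_nonneg x) hxn
    nlinarith [this]
  -- key bound on the cross term
  have key : -(M * η₁) * ‖a‖ ^ 2 ≤ ⟪a, mv K x⟫ := by
    rcases eq_or_lt_of_le hη with h0 | hpos
    · have hx0 : x = 0 := by
        have : ‖x‖ ≤ 0 := by rw [← h0] at hxn; simpa using hxn
        exact norm_le_zero_iff.mp this
      rw [hx0]
      have : mv K (0 : EuclideanSpace ℝ (Fin p)) = 0 := by
        have := mv_smul K 0 (0 : EuclideanSpace ℝ (Fin p))
        simpa using this
      rw [this, inner_zero_right, ← h0]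
      simp
    · have hexp : ⟪η₁ • a + x, mv K (η₁ • a + x)⟫ =
          η₁ ^ 2 * ⟪a, mv K a⟫ + 2 * η₁ * ⟪a, mv K x⟫ + ⟪x, mv K x⟫ := by
        rw [mv_add, mv_smul]
        simp only [inner_add_left, inner_add_right, real_inner_smul_left,
          real_inner_smul_right, inner_mv_symm hKsymm x a]
        ring
      have h0 : 0 ≤ ⟪η₁ • a + x, mv K (η₁ • a + x)⟫ :=
        le_trans (mul_nonneg hm.le (sq_nonneg _)) (hlow _)
      rw [hexp] at h0
      have hQa := hhigh a
      have hQx := hhigh x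
      have hMx : M * ‖x‖ ^ 2 ≤ M * (η₁ ^ 2 * ‖a‖ ^ 2) := mul_le_mul_of_nonneg_left hxsq hM0
      nlinarith [h0, hQa, hQx, hMx, hpos, sq_nonneg ‖a‖]
  have hna : 0 < ‖a‖ ^ 2 := pow_pos (norm_pos_iff.mpr ha) 2
  constructor
  · have := hlow a
    nlinarith [this, hacute, key]
  · have : 0 < m - M * η₁ := by linarith
    positivity
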